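/- For two positive-semidefinite n×n complex matrices M and N, the equality Tr(M N) = Tr(M) · Tr(N) holds if and only if at least one of the following is true: (1) M = 0; (2) N = 0; (3) there exist positive real numbers m, n and a rank-one orthogonal projection matrix P such that M = m·P and N = n·P. -/

import Mathlib

set_option maxHeartbeats 1000000

open Matrix ComplexOrder

lemma conj_mul_self (z : ℂ) : (starRingEnd ℂ) z * z = ((‖z‖^2 : ℝ) : ℂ) := by
  rw [mul_comm, Complex.mul_conj']; exact (Complex.ofReal_pow _ _).symm

lemma vecMulVec_mulVec' {n : ℕ} (w v x : Fin n → ℂ) : (vecMulVec w v) *ᵥ x = (v ⬝ᵥ x) • w := by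
  ext i
  simp only [vecMulVec_apply, mulVec, dotProduct, Pi.smul_apply, smul_eq_mul, Finset.sum_mul]
  exact Finset.sum_congr rfl fun j _ => by ring

lemma dotProduct_star_self_ne_zero {n : ℕ} {v : Fin n → ℂ} (hv : v ≠ 0) :
    v ⬝ᵥ star v ≠ 0 := by
  have h : v ⬝ᵥ star v = ((∑ j, ‖v j‖^2 : ℝ) : ℂ) := by
    push_cast
    refine Finset.sum_congr rfl fun j _ => ?_
    rw [Pi.star_apply]; rw [show star (v j) = (starRingEnd ℂ) (v j) from rfl, Complex.mul_conj']
  rw [h]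
  norm_cast
  intro h0
  apply hv
  funext j
  have := (Finset.sum_eq_zero_iff_of_nonneg (fun j _ => by positivity)).mp h0 j (Finset.mem_univ j)
  simpa using pow_eq_zero_iff (n := 2) (by norm_num) |>.mp (by simpa using this)

lemma rank_vecMulVec_one {n : ℕ} {w v : Fin n → ℂ} (hw : w ≠ 0) (hv : v ≠ 0) :
    (vecMulVec w v).rank = 1 := by
  have hrange : LinearMap.range (vecMulVec w v).mulVecLin = Submodule.span ℂ {w} := by
    apply le_antisymm
    · rintro - ⟨x, rfl⟩
      rw [mulVecLin_apply, vecMulVec_mulVec']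
      exact Submodule.smul_mem _ _ (Submodule.mem_span_singleton_self w)
    · rw [Submodule.span_singleton_le_iff_mem]
      refine ⟨(v ⬝ᵥ star v)⁻¹ • star v, ?_⟩
      rw [mulVecLin_apply, vecMulVec_mulVec', dotProduct_smul, smul_eq_mul,
        inv_mul_cancel₀ (dotProduct_star_self_ne_zero hv), one_smul]
  rw [Matrix.rank, hrange, finrank_span_singleton hw]

lemma trace_proj_eq_one {n : ℕ} {P : Matrix (Fin n) (Fin n) ℂ}
    (hH : P.IsHermitian) (hP : P * P = P) (hr : P.rank = 1) : Matrix.trace P = 1 := by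
  classical
  set U : Matrix (Fin n) (Fin n) ℂ := (hH.eigenvectorUnitary : Matrix (Fin n) (Fin n) ℂ) with hU
  have hUU : U * star U = 1 := (Matrix.mem_unitaryGroup_iff).mp hH.eigenvectorUnitary.2
  have hUU' : star U * U = 1 := (Matrix.mem_unitaryGroup_iff').mp hH.eigenvectorUnitary.2
  set e := hH.eigenvalues with he
  set D : Matrix (Fin n) (Fin n) ℂ := diagonal (RCLike.ofReal ∘ e) with hD
  have hspec : P = U * D * star U := hH.spectral_theorem
  have hDP : D = star U * P * U := by
    rw [hspec, mul_assoc, mul_assoc, hUU', mul_one, ← mul_assoc, hUU', one_mul]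
  -- D is idempotent
  have hDD : D * D = D := by
    rw [hDP]
    calc (star U * P * U) * (star U * P * U)
        = star U * (P * (U * star U) * P) * U := by
          simp only [mul_assoc]
      _ = star U * P * U := by rw [hUU, mul_one, hP]
  -- eigenvalues are 0 or 1
  have h01 : ∀ i, e i = 0 ∨ e i = 1 := by
    intro i
    have h := hDD
    rw [hD, diagonal_mul_diagonal] at h
    have h2 := congrFun (diagonal_injective h) i
    simp only [Function.comp_apply, Pi.mul_apply] at h2
    have h3 : e i * e i = e i := by exact_mod_cast h2
    have h4 : e i * (e i - 1) = 0 := by nlinarith [h3]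
    rcases mul_eq_zero.mp h4 with h | h
    · exact Or.inl h
    · exact Or.inr (by linarith)
  -- trace P = trace D
  have htr : Matrix.trace P = ((∑ i, e i : ℝ) : ℂ) := by
    rw [hspec, Matrix.trace_mul_comm, ← mul_assoc, hUU', one_mul, hD, trace_diagonal]
    push_cast
    rfl
  -- rank = card of nonzero eigenvalues
  have hcard : (Finset.univ.filter fun i => e i ≠ 0).card = 1 := by
    have := hH.rank_eq_card_non_zero_eigs
    rw [hr] at this
    rw [← Fintype.card_subtype]
    exact this.symm
  have hsum : ∑ i, e i = 1 := by
    rw [← Finset.sum_filter_add_sum_filter_not Finset.univ (fun i => e i ≠ 0)]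
    have h1 : ∑ i ∈ Finset.univ.filter (fun i => e i ≠ 0), e i = 1 := by
      have : ∀ i ∈ Finset.univ.filter (fun i => e i ≠ 0), e i = 1 := by
        intro i hi
        rcases h01 i with h | h
        · exact absurd h (Finset.mem_filter.mp hi).2
        · exact h
      rw [Finset.sum_congr rfl this, Finset.sum_const, hcard]
      simp
    have h2 : ∑ i ∈ Finset.univ.filter (fun i => ¬ e i ≠ 0), e i = 0 := by
      refine Finset.sum_eq_zero fun i hi => ?_
      have := (Finset.mem_filter.mp hi).2
      push_neg at this
      exact this
    rw [h1, h2, add_zero]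
  rw [htr, hsum]
  norm_num

open scoped MatrixOrder in
lemma posSemidef_iff_eq_transpose_mul_self {n : ℕ} {M : Matrix (Fin n) (Fin n) ℂ} :
    M.PosSemidef ↔ ∃ A : Matrix (Fin n) (Fin n) ℂ, M = Aᴴ * A := by
  refine ⟨fun hM => ?_, fun ⟨A, hA⟩ => hA ▸ posSemidef_conjTranspose_mul_self A⟩
  obtain ⟨A, hA⟩ := CStarAlgebra.nonneg_iff_eq_star_mul_self.mp hM.nonneg
  exact ⟨A, hA⟩

/-- For positive-semidefinite n×n complex matrices M and N, Tr(MN) = Tr(M)·Tr(N)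
holds iff M = 0, or N = 0, or M = m·P and N = n·P for some positive reals m, n and
a rank-one orthogonal projection P. -/
theorem trace_mul_eq_trace_mul_trace_iff {n : ℕ} (M N : Matrix (Fin n) (Fin n) ℂ)
    (hM : M.PosSemidef) (hN : N.PosSemidef) :
    (Matrix.trace (M * N)).re = (Matrix.trace M).re * (Matrix.trace N).re ↔
      M = 0 ∨ N = 0 ∨
        ∃ (m' n' : ℝ) (P : Matrix (Fin n) (Fin n) ℂ),
          0 < m' ∧ 0 < n' ∧ P.IsHermitian ∧ P * P = P ∧ P.rank = 1 ∧
          M = (m' : ℂ) • P ∧ N = (n' : ℂ) • P := by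
  classical
  constructor
  · intro h
    by_cases hM0 : M = 0
    · exact Or.inl hM0
    by_cases hN0 : N = 0
    · exact Or.inr (Or.inl hN0)
    refine Or.inr (Or.inr ?_)
    obtain ⟨A, hA⟩ := posSemidef_iff_eq_transpose_mul_self.mp hM
    obtain ⟨B, hB⟩ := posSemidef_iff_eq_transpose_mul_self.mp hN
    set x : Fin n → EuclideanSpace ℂ (Fin n) := fun i => (WithLp.equiv 2 _).symm (A i) with hx
    set y : Fin n → EuclideanSpace ℂ (Fin n) := fun k => (WithLp.equiv 2 _).symm (B k) with hy
    have hre : ∀ z : ℂ, ((starRingEnd ℂ) z * z).re = ‖z‖^2 := fun z => by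
      rw [conj_mul_self]; exact Complex.ofReal_re _
    have hre' : ∀ z : ℂ, (z * star z).re = ‖z‖^2 := fun z => by
      rw [mul_comm]; exact hre z
    -- norms of rows
    have hxnorm : ∀ i, ‖x i‖^2 = ∑ j, ‖A i j‖^2 := by
      intro i
      rw [EuclideanSpace.norm_eq, Real.sq_sqrt (by positivity)]
      exact Finset.sum_congr rfl fun j _ => by rw [hx]; simp
    have hynorm : ∀ k, ‖y k‖^2 = ∑ j, ‖B k j‖^2 := by
      intro k
      rw [EuclideanSpace.norm_eq, Real.sq_sqrt (by positivity)]
      exact Finset.sum_congr rfl fun j _ => by rw [hy]; simp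
    -- inner products of rows
    have hinner : ∀ i k, (inner ℂ (x i) (y k) : ℂ) = ∑ j, (starRingEnd ℂ) (A i j) * B k j := by
      intro i k
      rw [PiLp.inner_apply]
      exact Finset.sum_congr rfl fun j _ => RCLike.inner_apply' _ _
    -- trace M
    have htrM : (Matrix.trace M).re = ∑ i, ‖x i‖^2 := by
      rw [hA]
      simp only [Matrix.trace, Matrix.diag, Matrix.mul_apply, conjTranspose_apply,
        Complex.re_sum]
      rw [Finset.sum_comm]
      refine Finset.sum_congr rfl fun i _ => ?_
      rw [hxnorm i]
      exact Finset.sum_congr rfl fun j _ => hre _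
    have htrN : (Matrix.trace N).re = ∑ k, ‖y k‖^2 := by
      rw [hB]
      simp only [Matrix.trace, Matrix.diag, Matrix.mul_apply, conjTranspose_apply,
        Complex.re_sum]
      rw [Finset.sum_comm]
      refine Finset.sum_congr rfl fun k _ => ?_
      rw [hynorm k]
      exact Finset.sum_congr rfl fun j _ => hre _
    -- trace of product
    have hfact : ∀ i k, (inner ℂ (x i) (y k) : ℂ) = star ((A * Bᴴ) i k) := by
      intro i k
      rw [hinner]
      simp only [Matrix.mul_apply, conjTranspose_apply, star_sum, star_mul', star_star]
      rfl
    have htrMN : (Matrix.trace (M * N)).re = ∑ i, ∑ k, ‖(inner ℂ (x i) (y k) : ℂ)‖^2 := by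
      have e1 : Matrix.trace (M * N) = Matrix.trace ((A * Bᴴ) * (B * Aᴴ)) := by
        rw [hA, hB]
        rw [show Aᴴ * A * (Bᴴ * B) = Aᴴ * (A * (Bᴴ * B)) from by simp only [mul_assoc]]
        rw [Matrix.trace_mul_comm]
        simp only [mul_assoc]
      have e2 : ∀ i k, (B * Aᴴ) k i = star ((A * Bᴴ) i k) := by
        intro k i
        simp only [Matrix.mul_apply, conjTranspose_apply, star_sum, star_mul', star_star]
        exact Finset.sum_congr rfl fun j _ => by ring
      rw [e1]
      simp only [Matrix.trace, Matrix.diag, Complex.re_sum]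
      refine Finset.sum_congr rfl fun i _ => ?_
      rw [Matrix.mul_apply, Complex.re_sum]
      refine Finset.sum_congr rfl fun k _ => ?_
      rw [e2, hre', hfact i k, norm_star]
    -- Cauchy-Schwarz and the equality condition
    have key : ∀ i k, ‖(inner ℂ (x i) (y k) : ℂ)‖ = ‖x i‖ * ‖y k‖ := by
      have hterm0 : ∀ i k, 0 ≤ ‖x i‖^2 * ‖y k‖^2 - ‖(inner ℂ (x i) (y k) : ℂ)‖^2 := by
        intro i k
        have hcs := norm_inner_le_norm (𝕜 := ℂ) (x i) (y k)
        have h1 : (0:ℝ) ≤ ‖(inner ℂ (x i) (y k) : ℂ)‖ := norm_nonneg _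
        nlinarith [norm_nonneg (x i), norm_nonneg (y k)]
      have hzero : ∑ i, ∑ k, (‖x i‖^2 * ‖y k‖^2 - ‖(inner ℂ (x i) (y k) : ℂ)‖^2) = 0 := by
        simp only [Finset.sum_sub_distrib]
        rw [← Finset.sum_mul_sum]
        rw [← htrM, ← htrN, ← htrMN, h]
        ring
      have hterm : ∀ i k, ‖x i‖^2 * ‖y k‖^2 - ‖(inner ℂ (x i) (y k) : ℂ)‖^2 = 0 := by
        intro i k
        have h1 := (Finset.sum_eq_zero_iff_of_nonneg
          (fun i _ => Finset.sum_nonneg fun k _ => hterm0 i k)).mp hzero i (Finset.mem_univ i)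
        exact (Finset.sum_eq_zero_iff_of_nonneg (fun k _ => hterm0 i k)).mp h1 k
          (Finset.mem_univ k)
      intro i k
      have h2 : ‖(inner ℂ (x i) (y k) : ℂ)‖^2 = (‖x i‖ * ‖y k‖)^2 := by
        rw [mul_pow]; linarith [hterm i k]
      calc ‖(inner ℂ (x i) (y k) : ℂ)‖ = Real.sqrt (‖(inner ℂ (x i) (y k) : ℂ)‖^2) :=
            (Real.sqrt_sq (norm_nonneg _)).symm
        _ = Real.sqrt ((‖x i‖ * ‖y k‖)^2) := by rw [h2]
        _ = ‖x i‖ * ‖y k‖ := Real.sqrt_sq (by positivity)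
    -- nonzero rows
    have hxne : ∃ i0, x i0 ≠ 0 := by
      by_contra hc
      push_neg at hc
      apply hM0
      have hA0 : A = 0 := by
        funext i
        have := hc i
        rw [hx] at this
        have h2 := congrArg (WithLp.equiv 2 (Fin n → ℂ)) this
        exact (show A i = 0 by simpa using h2)
      rw [hA, hA0]
      simp
    have hyne : ∃ k0, y k0 ≠ 0 := by
      by_contra hc
      push_neg at hc
      apply hN0
      have hB0 : B = 0 := by
        funext k
        have := hc k
        rw [hy] at this
        have h2 := congrArg (WithLp.equiv 2 (Fin n → ℂ)) this
        exact (show B k = 0 by simpa using h2)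
      rw [hB, hB0]
      simp
    obtain ⟨i0, hx0⟩ := hxne
    obtain ⟨k0, hy0⟩ := hyne
    set u : EuclideanSpace ℂ (Fin n) := ((‖x i0‖⁻¹ : ℝ) : ℂ) • x i0 with hu
    have hxinorm : (‖x i0‖ : ℝ) ≠ 0 := norm_ne_zero_iff.mpr hx0
    have hnu : ‖u‖ = 1 := by
      rw [hu, norm_smul, Complex.norm_real, Real.norm_eq_abs,
        abs_of_nonneg (by positivity), inv_mul_cancel₀ hxinorm]
    have hx_back : x i0 = ((‖x i0‖ : ℝ) : ℂ) • u := by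
      rw [hu, smul_smul, ← Complex.ofReal_mul, mul_inv_cancel₀ hxinorm]
      simp
    have hy_span : ∀ k, ∃ d : ℂ, y k = d • u := by
      intro k
      by_cases hk : y k = 0
      · exact ⟨0, by simp [hk]⟩
      obtain ⟨r, hr0, hr⟩ := (norm_inner_eq_norm_iff hx0 hk).mp (key i0 k)
      refine ⟨r * ((‖x i0‖ : ℝ) : ℂ), ?_⟩
      rw [← smul_smul, ← hx_back]
      exact hr
    have hx_span : ∀ i, ∃ c : ℂ, x i = c • u := by
      intro i
      by_cases hi : x i = 0
      · exact ⟨0, by simp [hi]⟩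
      obtain ⟨r, hr0, hr⟩ := (norm_inner_eq_norm_iff hi hy0).mp (key i k0)
      obtain ⟨d, hd⟩ := hy_span k0
      refine ⟨r⁻¹ * d, ?_⟩
      have h3 : x i = r⁻¹ • y k0 := by
        rw [hr, inv_smul_smul₀ hr0]
      rw [h3, hd, smul_smul]
    choose c hc using hx_span
    choose d hd using hy_span
    set uf : Fin n → ℂ := fun j => u j with huf
    have hAij : ∀ i j, A i j = c i * uf j := by
      intro i j
      have h1 : A i j = x i j := rfl
      rw [h1, hc i]
      simp [huf, PiLp.smul_apply]
    have hBkj : ∀ k j, B k j = d k * uf j := by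
      intro k j
      have h1 : B k j = y k j := rfl
      rw [h1, hd k]
      simp [huf, PiLp.smul_apply]
    have hnorm_sum : ∑ j, ‖uf j‖^2 = 1 := by
      have h1 : ‖u‖^2 = ∑ j, ‖uf j‖^2 := by
        rw [EuclideanSpace.norm_eq, Real.sq_sqrt (by positivity)]
      rw [← h1, hnu, one_pow]
    have hu1 : ∑ j, (starRingEnd ℂ) (uf j) * uf j = 1 := by
      rw [Finset.sum_congr rfl fun j _ => conj_mul_self (uf j), ← Complex.ofReal_sum,
        hnorm_sum, Complex.ofReal_one]
    have hufne : uf ≠ 0 := by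
      intro h0
      rw [h0] at hnorm_sum
      simp at hnorm_sum
    set P : Matrix (Fin n) (Fin n) ℂ := vecMulVec (star uf) uf with hP
    set m' : ℝ := ∑ i, ‖c i‖^2 with hm'
    set n'' : ℝ := ∑ k, ‖d k‖^2 with hn''
    have hMP : M = (m' : ℂ) • P := by
      rw [hA]
      ext j l
      simp only [Matrix.mul_apply, conjTranspose_apply, Matrix.smul_apply, hP,
        vecMulVec_apply, Pi.star_apply, smul_eq_mul]
      calc ∑ i, star (A i j) * A i l
          = ∑ i, ((starRingEnd ℂ) (c i) * c i) * (star (uf j) * uf l) := by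
            refine Finset.sum_congr rfl fun i _ => ?_
            rw [hAij i j, hAij i l]
            simp only [star_mul', Complex.star_def]
            ring
        _ = (∑ i, (starRingEnd ℂ) (c i) * c i) * (star (uf j) * uf l) := by
            rw [Finset.sum_mul]
        _ = (m' : ℂ) * (star (uf j) * uf l) := by
            rw [Finset.sum_congr rfl fun i _ => conj_mul_self (c i), ← Complex.ofReal_sum]
    have hNP : N = (n'' : ℂ) • P := by
      rw [hB]
      ext j l
      simp only [Matrix.mul_apply, conjTranspose_apply, Matrix.smul_apply, hP,
        vecMulVec_apply, Pi.star_apply, smul_eq_mul]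
      calc ∑ k, star (B k j) * B k l
          = ∑ k, ((starRingEnd ℂ) (d k) * d k) * (star (uf j) * uf l) := by
            refine Finset.sum_congr rfl fun k _ => ?_
            rw [hBkj k j, hBkj k l]
            simp only [star_mul', Complex.star_def]
            ring
        _ = (∑ k, (starRingEnd ℂ) (d k) * d k) * (star (uf j) * uf l) := by
            rw [Finset.sum_mul]
        _ = (n'' : ℂ) * (star (uf j) * uf l) := by
            rw [Finset.sum_congr rfl fun k _ => conj_mul_self (d k), ← Complex.ofReal_sum]
    have hm'pos : 0 < m' := by
      rcases (show (0:ℝ) ≤ m' from by positivity).lt_or_eq with h1 | h1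
      · exact h1
      · exfalso
        apply hM0
        rw [hMP, ← h1]
        simp
    have hn''pos : 0 < n'' := by
      rcases (show (0:ℝ) ≤ n'' from by positivity).lt_or_eq with h1 | h1
      · exact h1
      · exfalso
        apply hN0
        rw [hNP, ← h1]
        simp
    have hPH : P.IsHermitian := by
      rw [Matrix.IsHermitian]
      ext j l
      simp only [conjTranspose_apply, hP, vecMulVec_apply, Pi.star_apply, star_mul', star_star]
      ring
    have hPP : P * P = P := by
      ext j l
      simp only [Matrix.mul_apply, hP, vecMulVec_apply, Pi.star_apply]
      calc ∑ k, star (uf j) * uf k * (star (uf k) * uf l)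
          = ∑ k, (star (uf j) * uf l) * ((starRingEnd ℂ) (uf k) * uf k) := by
            refine Finset.sum_congr rfl fun k _ => ?_
            simp only [Complex.star_def]
            ring
        _ = star (uf j) * uf l := by
            rw [← Finset.mul_sum, hu1, mul_one]
    have hstar : star uf ≠ 0 := fun h0 => hufne (by simpa using congrArg star h0)
    have hrank : P.rank = 1 := by
      rw [hP]
      exact rank_vecMulVec_one hstar hufne
    exact ⟨m', n'', P, hm'pos, hn''pos, hPH, hPP, hrank, hMP, hNP⟩
  · rintro (hM0 | hN0 | ⟨m', n', P, hm'pos, hn'pos, hPH, hPP, hr, hMe, hNe⟩)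
    · rw [hM0]; simp
    · rw [hN0]; simp
    · have htr := trace_proj_eq_one hPH hPP hr
      rw [hMe, hNe]
      rw [smul_mul_smul_comm, hPP]
      simp only [Matrix.trace_smul, htr, smul_eq_mul, mul_one]
      simp [Complex.ofReal_re]
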